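/- arXiv:1705.02964 — 5 statements merged into one kernel-verified Lean document; each statement's English description precedes it below -/
import Mathlib

section
/- Let N ∈ ℕ, K ≥ 0, L > 0, and 0 < γ₀ ≤ γ_N with γ₀ < 1. If 0 < ε < γ₀ / (L((1+γ_N)(N+1) + γ₀ K)), and in particular ε < 1/(L(N+1+K)), then c := 1 - γ₀ + L(1 - γ₀ + γ_N) · ε(N+1)/(1 - εL(N+1+K)) satisfies 0 ≤ c < 1. -/
theorem stmt3 (N : ℕ) (K L γ₀ γN ε : ℝ) (hK : 0 ≤ K) (hL : 0 < L)
    (hγ0 : 0 < γ₀) (hγN : γ₀ ≤ γN) (hγ1 : γ₀ < 1)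
    (hε0 : 0 < ε) (hε : ε < γ₀ / (L * ((1 + γN) * (N + 1) + γ₀ * K)))
    (hε' : ε < 1 / (L * (N + 1 + K))) :
    0 ≤ 1 - γ₀ + L * (1 - γ₀ + γN) * (ε * (N + 1) / (1 - ε * L * (N + 1 + K))) ∧
      1 - γ₀ + L * (1 - γ₀ + γN) * (ε * (N + 1) / (1 - ε * L * (N + 1 + K))) < 1 := by
  have hN1 : (0:ℝ) < (N:ℝ) + 1 := by positivity
  have hden : (0:ℝ) < L * ((N:ℝ) + 1 + K) := by positivity
  have hD : 0 < 1 - ε * L * (N + 1 + K) := by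
    rw [lt_div_iff₀ hden] at hε'
    nlinarith
  have hS : (0:ℝ) < L * ((1 + γN) * (N + 1) + γ₀ * K) := by
    have : (0:ℝ) < (1 + γN) * (N + 1) + γ₀ * K := by nlinarith
    positivity
  rw [lt_div_iff₀ hS] at hε
  constructor
  · have h1 : 0 ≤ ε * (N + 1) / (1 - ε * L * (N + 1 + K)) := by positivity
    nlinarith [mul_nonneg (mul_nonneg hL.le (show (0:ℝ) ≤ 1 - γ₀ + γN by linarith)) h1]
  · rw [show (1:ℝ) - γ₀ + L * (1 - γ₀ + γN) * (ε * (N + 1) / (1 - ε * L * (N + 1 + K)))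
        = 1 - γ₀ + L * (1 - γ₀ + γN) * (ε * (N + 1)) / (1 - ε * L * (N + 1 + K)) by ring]
    rw [add_div' _ _ _ (ne_of_gt hD), div_lt_one hD]
    nlinarith
end

section
/- Let B denote the space of bounded continuous functions b : ℝ → ℝ with the sup norm, and let B_L = {g : ℝ → ℝ^{N+1} continuous : ‖g‖_∞ ≤ L and Lip(g) ≤ L}. Fix g ∈ B_L, continuous functions q_{2i} : ℝ → ℝ with ‖q_{2i}‖_∞ ≤ 1 and Lip(q_{2i}) = K_i for i = 0,…,N, constants T_c ∈ ℝ and ε > 0 with ε < 1/(L(N+1+K)) where K = Σᵢ Kᵢ. Then the map Φ : B → B defined by (Φb)(w) = ε(T_c − Σ_{i=0}^N (g(w+b(w)))_i · q_{2i}(w+b(w))) is a contraction with Lipschitz constant at most εL(N+1+K) < 1, and hence has a unique fixed point b* ∈ B. -/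
lemma coord_abs_le {n : ℕ} (x : EuclideanSpace ℝ (Fin n)) (i : Fin n) : |x i| ≤ ‖x‖ := by
  rw [EuclideanSpace.norm_eq]
  calc |x i| = Real.sqrt (‖x i‖ ^ 2) := by
        rw [Real.norm_eq_abs, Real.sqrt_sq_eq_abs, abs_abs]
    _ ≤ _ := Real.sqrt_le_sqrt (Finset.single_le_sum (fun j _ => sq_nonneg ‖x j‖)
        (Finset.mem_univ i))

theorem stmt4 (N : ℕ) (L Tc ε : ℝ) (hL : 0 < L)
    (g : ℝ → EuclideanSpace ℝ (Fin (N + 1)))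
    (hgc : Continuous g) (hgb : ∀ x, ‖g x‖ ≤ L)
    (hglip : LipschitzWith (Real.toNNReal L) g)
    (q : Fin (N + 1) → ℝ → ℝ) (Ki : Fin (N + 1) → NNReal)
    (hqc : ∀ i, Continuous (q i)) (hqb : ∀ i x, |q i x| ≤ 1)
    (hqlip : ∀ i, LipschitzWith (Ki i) (q i))
    (K : ℝ) (hKdef : K = ∑ i, (Ki i : ℝ))
    (hε0 : 0 < ε) (hε : ε < 1 / (L * (N + 1 + K)))
    (Φ : BoundedContinuousFunction ℝ ℝ → BoundedContinuousFunction ℝ ℝ)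
    (hΦ : ∀ b w, Φ b w = ε * (Tc - ∑ i, g (w + b w) i * q i (w + b w))) :
    (∀ b₁ b₂, dist (Φ b₁) (Φ b₂) ≤ ε * L * (N + 1 + K) * dist b₁ b₂) ∧
      ε * L * (N + 1 + K) < 1 ∧ ∃! b, Φ b = b := by
  have hK0 : 0 ≤ K := hKdef ▸ Finset.sum_nonneg fun i _ => (Ki i).coe_nonneg
  have hN1K : (0:ℝ) < N + 1 + K := by positivity
  have hC0 : 0 ≤ ε * L * (N + 1 + K) := by positivity
  have hlt : ε * L * (N + 1 + K) < 1 := by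
    have h := (lt_div_iff₀ (by positivity : (0:ℝ) < L * (N + 1 + K))).mp hε
    linarith [h]
  have key : ∀ b₁ b₂, dist (Φ b₁) (Φ b₂) ≤ ε * L * (N + 1 + K) * dist b₁ b₂ := by
    intro b₁ b₂
    refine BoundedContinuousFunction.dist_le (by positivity) |>.mpr fun w => ?_
    set x₁ := w + b₁ w
    set x₂ := w + b₂ w
    have hd : |x₁ - x₂| ≤ dist b₁ b₂ := by
      have : x₁ - x₂ = b₁ w - b₂ w := by ring
      rw [this, ← Real.dist_eq]
      exact BoundedContinuousFunction.dist_coe_le_dist w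
    rw [Real.dist_eq, hΦ, hΦ]
    have hterm : ∀ i : Fin (N + 1),
        |g x₁ i * q i x₁ - g x₂ i * q i x₂| ≤ (L * Ki i + L) * |x₁ - x₂| := by
      intro i
      have h1 : |g x₁ i| ≤ L := le_trans (coord_abs_le _ i) (hgb x₁)
      have h2 : |q i x₂| ≤ 1 := hqb i x₂
      have h3 : |q i x₁ - q i x₂| ≤ Ki i * |x₁ - x₂| := by
        have := (hqlip i).dist_le_mul x₁ x₂
        rwa [Real.dist_eq, Real.dist_eq] at this
      have h4 : |g x₁ i - g x₂ i| ≤ L * |x₁ - x₂| := by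
        have h5 := (hglip.dist_le_mul x₁ x₂)
        have h6 : |g x₁ i - g x₂ i| ≤ ‖g x₁ - g x₂‖ := by
          have := coord_abs_le (g x₁ - g x₂) i
          simpa using this
        have h7 : ‖g x₁ - g x₂‖ ≤ L * |x₁ - x₂| := by
          rw [← dist_eq_norm, ← Real.dist_eq]
          calc dist (g x₁) (g x₂) ≤ (Real.toNNReal L : ℝ) * dist x₁ x₂ := h5
            _ = L * dist x₁ x₂ := by rw [Real.coe_toNNReal _ hL.le]
        exact h6.trans h7
      calc |g x₁ i * q i x₁ - g x₂ i * q i x₂|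
          = |g x₁ i * (q i x₁ - q i x₂) + (g x₁ i - g x₂ i) * q i x₂| := by ring_nf
        _ ≤ |g x₁ i * (q i x₁ - q i x₂)| + |(g x₁ i - g x₂ i) * q i x₂| := abs_add_le _ _
        _ = |g x₁ i| * |q i x₁ - q i x₂| + |g x₁ i - g x₂ i| * |q i x₂| := by
            rw [abs_mul, abs_mul]
        _ ≤ L * (Ki i * |x₁ - x₂|) + (L * |x₁ - x₂|) * 1 :=
            add_le_add (mul_le_mul h1 h3 (abs_nonneg _) hL.le)
              (mul_le_mul h4 h2 (abs_nonneg _) (by positivity))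
        _ = (L * Ki i + L) * |x₁ - x₂| := by ring
    calc |ε * (Tc - ∑ i, g x₁ i * q i x₁) - ε * (Tc - ∑ i, g x₂ i * q i x₂)|
        = |ε| * |∑ i, (g x₂ i * q i x₂ - g x₁ i * q i x₁)| := by
          rw [← abs_mul]; congr 1; rw [Finset.sum_sub_distrib]; ring
      _ ≤ ε * ∑ i, |g x₁ i * q i x₁ - g x₂ i * q i x₂| := by
          rw [abs_of_pos hε0]
          gcongr
          calc |∑ i, (g x₂ i * q i x₂ - g x₁ i * q i x₁)|
              ≤ ∑ i, |g x₂ i * q i x₂ - g x₁ i * q i x₁| :=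
                Finset.abs_sum_le_sum_abs _ _
            _ = ∑ i, |g x₁ i * q i x₁ - g x₂ i * q i x₂| := by
                apply Finset.sum_congr rfl; intro i _; rw [abs_sub_comm]
      _ ≤ ε * ∑ i : Fin (N + 1), (L * Ki i + L) * |x₁ - x₂| := by
          gcongr with i; exact hterm i
      _ = ε * L * (N + 1 + K) * |x₁ - x₂| := by
          rw [← Finset.sum_mul, Finset.sum_add_distrib, ← Finset.mul_sum, ← hKdef, Finset.sum_const,
            Finset.card_univ, Fintype.card_fin, nsmul_eq_mul]
          push_cast
          ring
      _ ≤ ε * L * (N + 1 + K) * dist b₁ b₂ := by gcongr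
  refine ⟨key, hlt, ?_⟩
  have hlip : LipschitzWith (ε * L * (N + 1 + K)).toNNReal Φ :=
    LipschitzWith.of_dist_le_mul fun b₁ b₂ => by
      rw [Real.coe_toNNReal _ hC0]; exact key b₁ b₂
  have hcontr : ContractingWith (ε * L * (N + 1 + K)).toNNReal Φ := by
    constructor
    · rw [← Real.toNNReal_one]
      exact (Real.toNNReal_lt_toNNReal_iff one_pos).mpr hlt
    · exact hlip
  exact ⟨hcontr.fixedPoint Φ, hcontr.fixedPoint_isFixedPt,
    fun b hb => hcontr.fixedPoint_unique hb⟩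
end

section
/- Under the hypotheses of the preceding contraction result (g ∈ B_L, ‖q_{2i}‖_∞ ≤ 1, Lip(q_{2i}) = K_i, 0 < ε < 1/(L(N+1+K))), for every η ∈ ℝ there exists β ∈ ℝ such that η = β + ε(Σ_{i=0}^N (g(β))_i q_{2i}(β) − T_c). -/
theorem stmt5 (N : ℕ) (L Tc ε : ℝ) (hL : 0 < L)
    (g : ℝ → EuclideanSpace ℝ (Fin (N + 1)))
    (hgc : Continuous g) (hgb : ∀ x, ‖g x‖ ≤ L)
    (hglip : LipschitzWith (Real.toNNReal L) g)
    (q : Fin (N + 1) → ℝ → ℝ) (Ki : Fin (N + 1) → NNReal)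
    (hqc : ∀ i, Continuous (q i)) (hqb : ∀ i x, |q i x| ≤ 1)
    (hqlip : ∀ i, LipschitzWith (Ki i) (q i))
    (K : ℝ) (hKdef : K = ∑ i, (Ki i : ℝ))
    (hε0 : 0 < ε) (hε : ε < 1 / (L * (N + 1 + K))) :
    ∀ η : ℝ, ∃ β : ℝ, η = β + ε * (∑ i, g β i * q i β - Tc) := by
  intro η
  set h : ℝ → ℝ := fun β => β + ε * (∑ i, g β i * q i β - Tc) with hh
  have hcont : Continuous h := by
    apply continuous_id.add
    apply continuous_const.mul
    apply Continuous.sub _ continuous_const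
    exact continuous_finset_sum _ fun i _ =>
      ((continuous_apply i).comp ((PiLp.continuous_ofLp 2 _).comp hgc)).mul (hqc i)
  -- bound on the perturbation
  have hbound : ∀ β, |ε * (∑ i, g β i * q i β - Tc)| ≤ ε * ((N + 1) * L + |Tc|) := by
    intro β
    rw [abs_mul, abs_of_pos hε0]
    apply mul_le_mul_of_nonneg_left _ hε0.le
    refine (abs_sub _ _).trans (add_le_add_left ?_ _)
    calc |∑ i, g β i * q i β| ≤ ∑ i, |g β i * q i β| := Finset.abs_sum_le_sum_abs _ _
      _ ≤ ∑ _i : Fin (N + 1), L := by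
          apply Finset.sum_le_sum
          intro i _
          rw [abs_mul]
          have hcoord : |g β i| ≤ ‖g β‖ := by
            rw [EuclideanSpace.norm_eq]
            refine (Real.le_sqrt (abs_nonneg _) (Finset.sum_nonneg fun j _ => sq_nonneg _)).mpr ?_
            calc |g β i| ^ 2 = ‖g β i‖ ^ 2 := by rw [Real.norm_eq_abs]
              _ ≤ ∑ j, ‖g β j‖ ^ 2 := Finset.single_le_sum
                  (fun j _ => sq_nonneg ‖g β j‖) (Finset.mem_univ i)
          calc |g β i| * |q i β| ≤ L * 1 :=
                mul_le_mul (hcoord.trans (hgb β)) (hqb i β) (abs_nonneg _) hL.le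
            _ = L := mul_one L
      _ = (N + 1) * L := by simp [Finset.sum_const, mul_comm]
  set M := ε * ((N + 1) * L + |Tc|) with hM
  have h1 : h (η - M) ≤ η := by
    have := (abs_le.mp (hbound (η - M))).2
    simp only [hh]
    linarith
  have h2 : η ≤ h (η + M) := by
    have := (abs_le.mp (hbound (η + M))).1
    simp only [hh]
    linarith
  have hle : η - M ≤ η + M := by
    have : 0 ≤ M := le_trans (abs_nonneg _) (hbound 0)
    linarith
  obtain ⟨β, _, hβ⟩ := intermediate_value_Icc hle hcont.continuousOn ⟨h1, h2⟩
  exact ⟨β, hβ.symm⟩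
end

section
/- Fix g ∈ B_L with 0 < ε < 1/(L(N+1+K)). If β₁, β₂ ∈ ℝ and g, h ∈ B_L satisfy η = β₁ + ε(Σᵢ (g(β₁))ᵢ q_{2i}(β₁) − T_c) = β₂ + ε(Σᵢ (h(β₂))ᵢ q_{2i}(β₂) − T_c) for some η ∈ ℝ, then |β₁ − β₂| ≤ ε(N+1)/(1 − εL(N+1+K)) · ‖g − h‖_∞. -/
lemma coord_le_norm {n : ℕ} (v : EuclideanSpace ℝ (Fin n)) (i : Fin n) :
    |v i| ≤ ‖v‖ := by
  rw [EuclideanSpace.norm_eq, ← Real.sqrt_sq_eq_abs (v i)]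
  apply Real.sqrt_le_sqrt
  have e : v i ^ 2 = ‖v i‖ ^ 2 := by simp
  rw [e]
  exact Finset.single_le_sum (f := fun j => ‖v j‖ ^ 2) (fun j _ => by positivity)
    (Finset.mem_univ i)

theorem stmt6 (N : ℕ) (L Tc ε : ℝ) (hL : 0 < L)
    (g h : ℝ → EuclideanSpace ℝ (Fin (N + 1)))
    (hgc : Continuous g) (hgb : ∀ x, ‖g x‖ ≤ L)
    (hglip : LipschitzWith (Real.toNNReal L) g)
    (hhc : Continuous h) (hhb : ∀ x, ‖h x‖ ≤ L)
    (hhlip : LipschitzWith (Real.toNNReal L) h)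
    (q : Fin (N + 1) → ℝ → ℝ) (Ki : Fin (N + 1) → NNReal)
    (hqc : ∀ i, Continuous (q i)) (hqb : ∀ i x, |q i x| ≤ 1)
    (hqlip : ∀ i, LipschitzWith (Ki i) (q i))
    (K : ℝ) (hKdef : K = ∑ i, (Ki i : ℝ))
    (hε0 : 0 < ε) (hε : ε < 1 / (L * (N + 1 + K)))
    (β₁ β₂ η : ℝ)
    (h₁ : η = β₁ + ε * (∑ i, g β₁ i * q i β₁ - Tc))
    (h₂ : η = β₂ + ε * (∑ i, h β₂ i * q i β₂ - Tc)) :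
    |β₁ - β₂| ≤ ε * (N + 1) / (1 - ε * L * (N + 1 + K)) * ⨆ x, ‖g x - h x‖ := by
  set S := ⨆ x, ‖g x - h x‖ with hSdef
  have hL' : (Real.toNNReal L : ℝ) = L := Real.coe_toNNReal L hL.le
  have hK0 : 0 ≤ K := by
    rw [hKdef]; exact Finset.sum_nonneg fun i _ => (Ki i).coe_nonneg
  have hC0 : 0 < L * (N + 1 + K) := by positivity
  have hεC : ε * (L * (N + 1 + K)) < 1 := by
    rw [lt_div_iff₀ hC0] at hε; linarith
  have hbdd : BddAbove (Set.range fun x => ‖g x - h x‖) := by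
    refine ⟨2 * L, ?_⟩
    rintro _ ⟨x, rfl⟩
    calc ‖g x - h x‖ ≤ ‖g x‖ + ‖h x‖ := norm_sub_le _ _
      _ ≤ 2 * L := by linarith [hgb x, hhb x]
  have hSle : ‖g β₂ - h β₂‖ ≤ S := le_ciSup hbdd β₂
  have hS0 : 0 ≤ S := le_trans (norm_nonneg _) hSle
  set D := |β₁ - β₂| with hDdef
  have hD0 : 0 ≤ D := abs_nonneg _
  -- key identity
  have key : β₁ - β₂ = ε * ((∑ i, h β₂ i * q i β₂) - ∑ i, g β₁ i * q i β₁) := by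
    have h3 := h₁.symm.trans h₂
    nlinarith [h3]
  -- per-term bounds
  have hterm : ∀ i : Fin (N + 1),
      |h β₂ i * q i β₂ - g β₁ i * q i β₁| ≤ S + L * D + L * (Ki i : ℝ) * D := by
    intro i
    have e1 : h β₂ i * q i β₂ - g β₁ i * q i β₁
        = (h β₂ i - g β₂ i) * q i β₂ + (g β₂ i - g β₁ i) * q i β₂
          + g β₁ i * (q i β₂ - q i β₁) := by ring
    have hA : |(h β₂ i - g β₂ i) * q i β₂| ≤ S := by
      rw [abs_mul]
      have h1 : |h β₂ i - g β₂ i| ≤ S := by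
        have : h β₂ i - g β₂ i = (h β₂ - g β₂) i := by simp
        rw [this]
        calc |(h β₂ - g β₂) i| ≤ ‖h β₂ - g β₂‖ := coord_le_norm _ i
          _ = ‖g β₂ - h β₂‖ := norm_sub_rev _ _
          _ ≤ S := hSle
      calc |h β₂ i - g β₂ i| * |q i β₂| ≤ |h β₂ i - g β₂ i| * 1 :=
            mul_le_mul_of_nonneg_left (hqb i β₂) (abs_nonneg _)
        _ ≤ S := by rw [mul_one]; exact h1
    have hgd : ‖g β₂ - g β₁‖ ≤ L * D := by
      have := hglip.dist_le_mul β₂ β₁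
      rw [hL', Real.dist_eq] at this
      calc ‖g β₂ - g β₁‖ = dist (g β₂) (g β₁) := (dist_eq_norm _ _).symm
        _ ≤ L * |β₂ - β₁| := this
        _ = L * D := by rw [hDdef, abs_sub_comm]
    have hB : |(g β₂ i - g β₁ i) * q i β₂| ≤ L * D := by
      rw [abs_mul]
      have h1 : |g β₂ i - g β₁ i| ≤ L * D := by
        have e : g β₂ i - g β₁ i = (g β₂ - g β₁) i := by simp
        rw [e]
        exact le_trans (coord_le_norm _ i) hgd
      calc |g β₂ i - g β₁ i| * |q i β₂| ≤ |g β₂ i - g β₁ i| * 1 :=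
            mul_le_mul_of_nonneg_left (hqb i β₂) (abs_nonneg _)
        _ ≤ L * D := by rw [mul_one]; exact h1
    have hC : |g β₁ i * (q i β₂ - q i β₁)| ≤ L * (Ki i : ℝ) * D := by
      rw [abs_mul]
      have h1 : |g β₁ i| ≤ L := le_trans (coord_le_norm _ i) (hgb β₁)
      have h2 : |q i β₂ - q i β₁| ≤ (Ki i : ℝ) * D := by
        have := (hqlip i).dist_le_mul β₂ β₁
        rw [Real.dist_eq, Real.dist_eq] at this
        calc |q i β₂ - q i β₁| ≤ (Ki i : ℝ) * |β₂ - β₁| := this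
          _ = (Ki i : ℝ) * D := by rw [hDdef, abs_sub_comm]
      calc |g β₁ i| * |q i β₂ - q i β₁| ≤ L * ((Ki i : ℝ) * D) :=
            mul_le_mul h1 h2 (abs_nonneg _) hL.le
        _ = L * (Ki i : ℝ) * D := by ring
    calc |h β₂ i * q i β₂ - g β₁ i * q i β₁|
        = |(h β₂ i - g β₂ i) * q i β₂ + (g β₂ i - g β₁ i) * q i β₂
            + g β₁ i * (q i β₂ - q i β₁)| := by rw [e1]
      _ ≤ |(h β₂ i - g β₂ i) * q i β₂ + (g β₂ i - g β₁ i) * q i β₂|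
            + |g β₁ i * (q i β₂ - q i β₁)| := abs_add_le _ _
      _ ≤ (|(h β₂ i - g β₂ i) * q i β₂| + |(g β₂ i - g β₁ i) * q i β₂|)
            + |g β₁ i * (q i β₂ - q i β₁)| :=
          add_le_add_left (abs_add_le _ _) _
      _ ≤ S + L * D + L * (Ki i : ℝ) * D := by
          linarith [hA, hB, hC]
  have hsum : |(∑ i, h β₂ i * q i β₂) - ∑ i, g β₁ i * q i β₁|
      ≤ (N + 1) * S + L * (N + 1 + K) * D := by
    have e : (∑ i, h β₂ i * q i β₂) - ∑ i, g β₁ i * q i β₁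
        = ∑ i, (h β₂ i * q i β₂ - g β₁ i * q i β₁) := by
      rw [Finset.sum_sub_distrib]
    rw [e]
    calc |∑ i, (h β₂ i * q i β₂ - g β₁ i * q i β₁)|
        ≤ ∑ i, |h β₂ i * q i β₂ - g β₁ i * q i β₁| :=
          Finset.abs_sum_le_sum_abs _ _
      _ ≤ ∑ i : Fin (N + 1), (S + L * D + L * (Ki i : ℝ) * D) :=
          Finset.sum_le_sum fun i _ => hterm i
      _ = (N + 1) * S + L * (N + 1 + K) * D := by
          rw [Finset.sum_add_distrib, Finset.sum_const, ← Finset.sum_mul,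
            ← Finset.mul_sum, ← hKdef]
          simp [Finset.card_univ]
          ring
  have hineq : D ≤ ε * ((N + 1) * S + L * (N + 1 + K) * D) := by
    have e : D = ε * |(∑ i, h β₂ i * q i β₂) - ∑ i, g β₁ i * q i β₁| := by
      rw [hDdef, key, abs_mul, abs_of_pos hε0]
    exact e.trans_le (mul_le_mul_of_nonneg_left hsum hε0.le)
  rw [div_mul_eq_mul_div, le_div_iff₀ (by linarith : (0:ℝ) < 1 - ε * L * (N + 1 + K))]
  nlinarith [hineq]
end

section
/- Let g* ∈ B_L be the fixed point of the graph transform. For all η ∈ ℝ, with β = η + b_{g*}(η) the preimage of η, one has ‖g*(β) − h⁰(β)‖ ≤ ε·ω, where ω = (L/γ₀)(|T_c| + (N+1)L). Hence the invariant manifold M_ε = graph(g*) lies within O(ε) of M₀ = graph(h⁰) in the sup norm along preimages. -/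
theorem stmt11 (N : ℕ) (ε Tc L γ₀ : ℝ) (hL : 0 < L) (hγ0 : 0 < γ₀) (hε0 : 0 < ε)
    (γ : Fin (N + 1) → ℝ) (hγ : ∀ i, γ₀ ≤ γ i)
    (f : Fin (N + 1) → ℝ → ℝ) (q : Fin (N + 1) → ℝ → ℝ) (hqb : ∀ i x, |q i x| ≤ 1)
    (h0 : ℝ → EuclideanSpace ℝ (Fin (N + 1))) (hh0 : ∀ η i, h0 η i = f i η)
    (gstar : ℝ → EuclideanSpace ℝ (Fin (N + 1)))
    (hgb : ∀ x, ‖gstar x‖ ≤ L) (hglip : LipschitzWith (Real.toNNReal L) gstar)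
    (F : EuclideanSpace ℝ (Fin (N + 1)) → ℝ → EuclideanSpace ℝ (Fin (N + 1)))
    (hF : ∀ x η i, F x η i = -γ i * (x i - f i η))
    (b : ℝ → ℝ)
    (hb : ∀ η, b η = ε * (Tc - ∑ i, gstar (η + b η) i * q i (η + b η)))
    (hfix : ∀ η, gstar η = gstar (η + b η) + F (gstar (η + b η)) (η + b η)) :
    ∀ η, ‖gstar (η + b η) - h0 (η + b η)‖ ≤ ε * (L / γ₀ * (|Tc| + (N + 1) * L)) := by
  intro η
  set β := η + b η with hβ
  -- component bound
  have hcomp : ∀ (x : EuclideanSpace ℝ (Fin (N+1))) i, |x i| ≤ ‖x‖ := by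
    intro x i
    rw [EuclideanSpace.norm_eq]
    have : |x i| = Real.sqrt (‖x i‖ ^ 2) := by
      rw [Real.norm_eq_abs, Real.sqrt_sq (abs_nonneg _)]
    rw [this]
    apply Real.sqrt_le_sqrt
    exact Finset.single_le_sum (f := fun j => ‖x j‖ ^ 2) (fun j _ => by positivity)
      (Finset.mem_univ i)
  -- bound |b η|
  have hbb : |b η| ≤ ε * (|Tc| + (N + 1) * L) := by
    rw [hb η, abs_mul, abs_of_pos hε0]
    apply mul_le_mul_of_nonneg_left _ hε0.le
    calc |Tc - ∑ i, gstar β i * q i β|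
        ≤ |Tc| + |∑ i, gstar β i * q i β| := abs_sub _ _
      _ ≤ |Tc| + (N + 1) * L := by
          gcongr
          calc |∑ i, gstar β i * q i β| ≤ ∑ i, |gstar β i * q i β| :=
                Finset.abs_sum_le_sum_abs _ _
            _ ≤ ∑ _i : Fin (N+1), L := by
                apply Finset.sum_le_sum
                intro i _
                rw [abs_mul]
                calc |gstar β i| * |q i β| ≤ ‖gstar β‖ * 1 :=
                      mul_le_mul (hcomp _ i) (hqb i β) (abs_nonneg _)
                        (norm_nonneg _)
                  _ ≤ L := by rw [mul_one]; exact hgb β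
            _ = (N + 1) * L := by simp [Finset.sum_const, nsmul_eq_mul]
  -- Lipschitz bound
  have hlipb : ‖gstar η - gstar β‖ ≤ L * |b η| := by
    have := hglip.dist_le_mul η β
    rw [dist_eq_norm] at this
    have h2 : dist η β = |b η| := by
      rw [Real.dist_eq, hβ]; simp [abs_sub_comm]
    rw [h2] at this
    calc ‖gstar η - gstar β‖ ≤ (Real.toNNReal L : ℝ) * |b η| := this
      _ = L * |b η| := by rw [Real.coe_toNNReal _ hL.le]
  -- γ₀ bound
  have hγb : γ₀ * ‖gstar β - h0 β‖ ≤ ‖gstar η - gstar β‖ := by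
    have hFe : gstar η - gstar β = F (gstar β) β := by
      rw [hfix η]; abel
    rw [hFe, EuclideanSpace.norm_eq, EuclideanSpace.norm_eq]
    rw [← Real.sqrt_sq hγ0.le, ← Real.sqrt_mul (by positivity)]
    apply Real.sqrt_le_sqrt
    rw [Finset.mul_sum]
    apply Finset.sum_le_sum
    intro i _
    have hFi : F (gstar β) β i = -γ i * (gstar β i - f i β) := hF _ _ i
    have hdi : (gstar β - h0 β) i = gstar β i - f i β := by
      simp [hh0]
    rw [hFi, hdi, Real.norm_eq_abs, Real.norm_eq_abs, abs_mul, mul_pow, sq_abs, sq_abs]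
    have h1 := hγ i
    rw [neg_sq]
    have h2 : γ₀ ^ 2 ≤ γ i ^ 2 := by nlinarith
    nlinarith [sq_nonneg (gstar β i - f i β), mul_le_mul_of_nonneg_right h2
      (sq_nonneg (gstar β i - f i β))]
  -- combine
  have key : γ₀ * ‖gstar β - h0 β‖ ≤ L * (ε * (|Tc| + (N + 1) * L)) := by
    calc γ₀ * ‖gstar β - h0 β‖ ≤ ‖gstar η - gstar β‖ := hγb
      _ ≤ L * |b η| := hlipb
      _ ≤ L * (ε * (|Tc| + (N + 1) * L)) := by gcongr
  rw [show ε * (L / γ₀ * (|Tc| + (N + 1) * L)) = L * (ε * (|Tc| + (N + 1) * L)) / γ₀ by ring,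
    le_div_iff₀ hγ0]
  nlinarith [key]
end
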